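/- Gap bound for averaged iterates: let f : ℝ^m × ℝ^n → ℝ be continuously differentiable, convex in x for each fixed y and concave in y for each fixed x, and let F(z) := (∇_x f(x,y), −∇_y f(x,y)) for z = (x,y). Let z_0, …, z_k ∈ ℝ^{m+n} with z_i = (x_i, y_i), let r_0, …, r_k > 0, set s_k := Σ_{i=0}^k r_i and define the averaged point ẑ_k = (x̂_k, ŷ_k) := Σ_{i=0}^k (r_i/s_k) z_i. Then for every z = (x, y) ∈ ℝ^{m+n}: f(x̂_k, y) − f(x, ŷ_k) ≤ (1/s_k) Σ_{i=0}^k r_i ⟨F(z_i), z_i − z⟩. -/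

import Mathlib

open scoped RealInnerProductSpace

open InnerProductSpace

/-- Gradient inequality for a convex function: `g b ≥ g a + ⟪∇g a, b − a⟫`. -/
lemma convex_grad_ineq {E : Type*} [NormedAddCommGroup E] [InnerProductSpace ℝ E]
    [CompleteSpace E] {g : E → ℝ} (hg : ConvexOn ℝ Set.univ g) (a b : E)
    (hd : DifferentiableAt ℝ g a) :
    g a - g b ≤ ⟪gradient g a, a - b⟫ := by
  have hc : HasDerivAt (fun t : ℝ => a + t • (b - a)) (b - a) 0 := by
    simpa using ((hasDerivAt_id (0 : ℝ)).smul_const (b - a)).const_add a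
  have hG : HasFDerivAt g (toDual ℝ E (gradient g a)) a := hd.hasGradientAt
  have hφ : HasDerivAt (fun t : ℝ => g (a + t • (b - a)))
      (⟪gradient g a, b - a⟫) 0 := by
    have hG' : HasFDerivAt g (toDual ℝ E (gradient g a)) (a + (0 : ℝ) • (b - a)) := by
      simpa using hG
    have := hG'.comp_hasDerivAt (0 : ℝ) hc
    simpa only [toDual_apply_apply, Function.comp_def] using this
  have hφc : ConvexOn ℝ Set.univ (fun t : ℝ => g (a + t • (b - a))) := by
    have haff : ConvexOn ℝ Set.univ (g ∘ (AffineMap.lineMap a b : ℝ →ᵃ[ℝ] E)) := by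
      simpa using hg.comp_affineMap (AffineMap.lineMap a b)
    have : (fun t : ℝ => g (a + t • (b - a))) =
        g ∘ (AffineMap.lineMap a b : ℝ →ᵃ[ℝ] E) := by
      funext t
      simp [AffineMap.lineMap_apply, Function.comp]
      rw [add_comm]
    rw [this]; exact haff
  have hs := hφc.le_slope_of_hasDerivAt (Set.mem_univ (0 : ℝ)) (Set.mem_univ (1 : ℝ))
    one_pos hφ
  have hslope : slope (fun t : ℝ => g (a + t • (b - a))) 0 1 = g b - g a := by
    simp [slope_def_field]
  rw [hslope] at hs
  have : ⟪gradient g a, a - b⟫ = -⟪gradient g a, b - a⟫ := by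
    rw [← inner_neg_right]; congr 1; abel
  rw [this]
  linarith

theorem gap_bound_averaged {m n : ℕ}
    (f : EuclideanSpace ℝ (Fin m) → EuclideanSpace ℝ (Fin n) → ℝ)
    (hf : ContDiff ℝ 1 fun p : EuclideanSpace ℝ (Fin m) × EuclideanSpace ℝ (Fin n) =>
      f p.1 p.2)
    (hcvx : ∀ y, ConvexOn ℝ Set.univ fun x => f x y)
    (hcave : ∀ x, ConcaveOn ℝ Set.univ fun y => f x y)
    (k : ℕ) (r : ℕ → ℝ) (hr : ∀ i ∈ Finset.range (k + 1), 0 < r i)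
    (x : ℕ → EuclideanSpace ℝ (Fin m)) (y : ℕ → EuclideanSpace ℝ (Fin n))
    (xz : EuclideanSpace ℝ (Fin m)) (yz : EuclideanSpace ℝ (Fin n)) :
    f (∑ i ∈ Finset.range (k + 1), (r i / ∑ j ∈ Finset.range (k + 1), r j) • x i) yz
      - f xz (∑ i ∈ Finset.range (k + 1), (r i / ∑ j ∈ Finset.range (k + 1), r j) • y i)
    ≤ (1 / ∑ j ∈ Finset.range (k + 1), r j) *
        ∑ i ∈ Finset.range (k + 1), r i *
          (⟪gradient (fun x' => f x' (y i)) (x i), x i - xz⟫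
            - ⟪gradient (fun y' => f (x i) y') (y i), y i - yz⟫) := by
  set s := ∑ j ∈ Finset.range (k + 1), r j with hs_def
  have hs : 0 < s := Finset.sum_pos hr ⟨0, Finset.mem_range.2 (Nat.succ_pos k)⟩
  set w : ℕ → ℝ := fun i => r i / s with hw_def
  have hw0 : ∀ i ∈ Finset.range (k + 1), 0 ≤ w i := fun i hi =>
    div_nonneg (hr i hi).le hs.le
  have hw1 : ∑ i ∈ Finset.range (k + 1), w i = 1 := by
    rw [hw_def, ← Finset.sum_div, ← hs_def, div_self hs.ne']
  have hdiff := hf.differentiable one_ne_zero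
  have hdx : ∀ i, DifferentiableAt ℝ (fun x' => f x' (y i)) (x i) := fun i =>
    (hdiff ((x i, y i))).comp (x i) (f := fun x' => (x', y i))
      ((differentiableAt_id.prodMk (differentiableAt_const (y i))))
  have hdy : ∀ i, DifferentiableAt ℝ (fun y' => f (x i) y') (y i) := fun i =>
    (hdiff ((x i, y i))).comp (y i) (f := fun y' => (x i, y'))
      (((differentiableAt_const (x i)).prodMk differentiableAt_id))
  -- per-iterate gap bound
  have key : ∀ i ∈ Finset.range (k + 1), f (x i) yz - f xz (y i) ≤
      ⟪gradient (fun x' => f x' (y i)) (x i), x i - xz⟫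
        - ⟪gradient (fun y' => f (x i) y') (y i), y i - yz⟫ := by
    intro i _
    have h1 : f (x i) (y i) - f xz (y i) ≤
        ⟪gradient (fun x' => f x' (y i)) (x i), x i - xz⟫ :=
      convex_grad_ineq (hcvx (y i)) (x i) xz (hdx i)
    -- concave side: apply to the negation
    have hneg : ConvexOn ℝ Set.univ (fun y' => -(f (x i) y')) := (hcave (x i)).neg
    have hdneg : DifferentiableAt ℝ (fun y' => -(f (x i) y')) (y i) := (hdy i).neg
    have h2 := convex_grad_ineq hneg (y i) yz hdneg
    have hgradneg : gradient (fun y' => -(f (x i) y')) (y i)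
        = -gradient (fun y' => f (x i) y') (y i) := by
      have hG : HasGradientAt (fun y' => f (x i) y')
          (gradient (fun y' => f (x i) y') (y i)) (y i) := (hdy i).hasGradientAt
      have : HasGradientAt (fun y' => -(f (x i) y'))
          (-gradient (fun y' => f (x i) y') (y i)) (y i) := by
        rw [hasGradientAt_iff_hasFDerivAt, map_neg]
        exact (hG.hasFDerivAt).neg
      exact this.gradient
    rw [hgradneg, inner_neg_left] at h2
    linarith
  -- Jensen on both sides
  have hJ1 : f (∑ i ∈ Finset.range (k + 1), w i • x i) yz ≤
      ∑ i ∈ Finset.range (k + 1), w i * f (x i) yz :=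
    (hcvx yz).map_sum_le hw0 hw1 (fun i _ => Set.mem_univ _)
  have hJ2 : ∑ i ∈ Finset.range (k + 1), w i * f xz (y i) ≤
      f xz (∑ i ∈ Finset.range (k + 1), w i • y i) :=
    (hcave xz).le_map_sum hw0 hw1 (fun i _ => Set.mem_univ _)
  have hmid : ∑ i ∈ Finset.range (k + 1), w i * (f (x i) yz - f xz (y i)) ≤
      ∑ i ∈ Finset.range (k + 1), w i *
        (⟪gradient (fun x' => f x' (y i)) (x i), x i - xz⟫
          - ⟪gradient (fun y' => f (x i) y') (y i), y i - yz⟫) :=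
    Finset.sum_le_sum fun i hi =>
      mul_le_mul_of_nonneg_left (key i hi) (hw0 i hi)
  have hrhs : ∑ i ∈ Finset.range (k + 1), w i *
      (⟪gradient (fun x' => f x' (y i)) (x i), x i - xz⟫
        - ⟪gradient (fun y' => f (x i) y') (y i), y i - yz⟫)
      = (1 / s) * ∑ i ∈ Finset.range (k + 1), r i *
          (⟪gradient (fun x' => f x' (y i)) (x i), x i - xz⟫
            - ⟪gradient (fun y' => f (x i) y') (y i), y i - yz⟫) := by
    rw [Finset.mul_sum]
    exact Finset.sum_congr rfl fun i _ => by rw [hw_def]; ring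
  have hsplit : ∑ i ∈ Finset.range (k + 1), w i * (f (x i) yz - f xz (y i))
      = (∑ i ∈ Finset.range (k + 1), w i * f (x i) yz)
        - ∑ i ∈ Finset.range (k + 1), w i * f xz (y i) := by
    rw [← Finset.sum_sub_distrib]
    exact Finset.sum_congr rfl fun i _ => by ring
  calc f (∑ i ∈ Finset.range (k + 1), w i • x i) yz
        - f xz (∑ i ∈ Finset.range (k + 1), w i • y i)
      ≤ (∑ i ∈ Finset.range (k + 1), w i * f (x i) yz)
        - ∑ i ∈ Finset.range (k + 1), w i * f xz (y i) := by linarith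
    _ = ∑ i ∈ Finset.range (k + 1), w i * (f (x i) yz - f xz (y i)) := hsplit.symm
    _ ≤ _ := hmid
    _ = _ := hrhs
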